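/- arXiv:2307.14202 — 6 statements merged into one kernel-verified Lean document; each statement's English description precedes it below -/
import Mathlib

section
/- For every s > 0, the Laplace transform of the piecewise release rate f_c(t) (equal to f_{c,1}(t) for 0 < t ≤ τ and to f_{c,2}(t) for t > τ) is ∫₀^τ e^{−s t} f_{c,1}(t) dt + ∫_τ^∞ e^{−s t} f_{c,2}(t) dt = (4 r_T² k_f μ (1 − e^{−τ s})/(N_v s)) Σ_n λ_n³ j₀(λ_n r_T)/[(2 λ_n r_T − sin(2 λ_n r_T))(D_v λ_n² + s)]. -/
open MeasureTheory Filter Topology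

lemma aux_hasDeriv (k : ℝ) (hk : k ≠ 0) (t : ℝ) :
    HasDerivAt (fun t => -(Real.exp (-(k*t))/k)) (Real.exp (-(k*t))) t := by
  have h1 : HasDerivAt (fun t : ℝ => -(k*t)) (-k) t := by
    exact (((hasDerivAt_id' t).const_mul k).neg).congr_deriv (by ring)
  have h2 := ((h1.exp).div_const k).neg
  refine h2.congr_deriv ?_
  field_simp

lemma aux_cont (k : ℝ) : Continuous (fun t : ℝ => Real.exp (-(k*t))) := by
  continuity

lemma aux_int_Icc (k τ : ℝ) (hk : 0 < k) :
    ∫ t in (0:ℝ)..τ, Real.exp (-(k*t)) = (1 - Real.exp (-(k*τ)))/k := by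
  rw [intervalIntegral.integral_eq_sub_of_hasDerivAt
    (fun t _ => aux_hasDeriv k hk.ne' t) ((aux_cont k).intervalIntegrable _ _)]
  simp
  ring

lemma aux_intOn (k b : ℝ) (hk : 0 < k) :
    IntegrableOn (fun t : ℝ => Real.exp (-(k*t))) (Set.Ioi b) := by
  simpa [neg_mul] using exp_neg_integrableOn_Ioi b hk

lemma aux_int_Ioi (k b : ℝ) (hk : 0 < k) :
    ∫ t in Set.Ioi b, Real.exp (-(k*t)) = Real.exp (-(k*b))/k := by
  have htend : Tendsto (fun t : ℝ => -(Real.exp (-(k*t))/k)) atTop (𝓝 0) := by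
    have h : Tendsto (fun t : ℝ => -(k*t)) atTop atBot := by
      apply Filter.tendsto_neg_atBot_iff.mpr
      exact Tendsto.const_mul_atTop hk tendsto_id
    have := (Real.tendsto_exp_atBot.comp h).div_const k
    simpa using this.neg
  have := MeasureTheory.integral_Ioi_of_hasDerivAt_of_tendsto'
    (fun x _ => aux_hasDeriv k hk.ne' x) (aux_intOn k b hk) htend
  rw [this]
  ring

theorem stmt_3
    (rT kf μ Nv Dv : ℝ)
    (hrT : 0 < rT) (hkf : 0 < kf) (hμ : 0 < μ) (hNv : 0 < Nv) (hDv : 0 < Dv)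
    (τ : ℝ) (hτ : τ = Nv / μ)
    (C : ℝ) (hCdef : C = 4 * rT ^ 2 * kf * μ / (Nv * Dv))
    (lam : ℕ → ℝ) (hlam : ∀ n, 0 < lam n)
    (hne : ∀ n, 2 * lam n * rT ≠ Real.sin (2 * lam n * rT))
    (c : ℕ → ℝ)
    (hc : ∀ n, c n = lam n * (Real.sin (lam n * rT) / (lam n * rT)) /
          (2 * lam n * rT - Real.sin (2 * lam n * rT)))
    (hsum : Summable fun n => |c n|)
    (fc1 : ℝ → ℝ)
    (hfc1 : ∀ t, fc1 t = C * ∑' n, c n * (1 - Real.exp (-(Dv * lam n ^ 2 * t))))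
    (fc2 : ℝ → ℝ)
    (hfc2 : ∀ t, fc2 t = C * ∑' n, c n *
          (Real.exp (-(Dv * lam n ^ 2 * (t - τ))) - Real.exp (-(Dv * lam n ^ 2 * t))))
    (s : ℝ) (hs : 0 < s) :
    (∫ t in (0:ℝ)..τ, Real.exp (-(s * t)) * fc1 t) +
      (∫ t in Set.Ioi τ, Real.exp (-(s * t)) * fc2 t) =
    4 * rT ^ 2 * kf * μ * (1 - Real.exp (-(τ * s))) / (Nv * s) *
      ∑' n, lam n ^ 3 * (Real.sin (lam n * rT) / (lam n * rT)) /
        ((2 * lam n * rT - Real.sin (2 * lam n * rT)) * (Dv * lam n ^ 2 + s)) := by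
  have hτ0 : 0 < τ := by rw [hτ]; positivity
  set a : ℕ → ℝ := fun n => Dv * lam n ^ 2 with ha
  have ha0 : ∀ n, 0 < a n := fun n => by
    have := hlam n; simp only [ha]; positivity
  have hsa : ∀ n, 0 < s + a n := fun n => add_pos hs (ha0 n)
  have hE1 : Real.exp (-(s*τ)) ≤ 1 := by
    rw [Real.exp_le_one_iff]; nlinarith
  have hE0 : 0 < Real.exp (-(s*τ)) := Real.exp_pos _
  -- Part 1
  have hI1 : (∫ t in (0:ℝ)..τ, Real.exp (-(s * t)) * fc1 t)
      = C * ∑' n, c n * ((1 - Real.exp (-(s*τ)))/s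
          - (1 - Real.exp (-((s + a n)*τ)))/(s + a n)) := by
    have hF1int : ∀ n, IntegrableOn
        (fun t => Real.exp (-(s*t)) * (c n * (1 - Real.exp (-(a n * t))))) (Set.Ioc 0 τ) := by
      intro n
      apply Continuous.integrableOn_Ioc
      exact (aux_cont s).mul (continuous_const.mul (continuous_const.sub (aux_cont (a n))))
    have hF1norm : Summable (fun n => ∫ t in Set.Ioc (0:ℝ) τ,
        ‖Real.exp (-(s*t)) * (c n * (1 - Real.exp (-(a n * t))))‖) := by
      apply Summable.of_nonneg_of_le (fun n => integral_nonneg fun t => norm_nonneg _) _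
        (hsum.mul_right τ)
      intro n
      calc ∫ t in Set.Ioc (0:ℝ) τ, ‖Real.exp (-(s*t)) * (c n * (1 - Real.exp (-(a n * t))))‖
          ≤ ∫ _t in Set.Ioc (0:ℝ) τ, |c n| := by
            apply setIntegral_mono_on ((hF1int n).norm)
              (integrableOn_const measure_Ioc_lt_top.ne) measurableSet_Ioc
            intro t ht
            have ht0 : 0 < t := ht.1
            have h1 : Real.exp (-(s*t)) ≤ 1 := by rw [Real.exp_le_one_iff]; nlinarith
            have h2 : Real.exp (-(a n*t)) ≤ 1 := by
              rw [Real.exp_le_one_iff]; nlinarith [ha0 n]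
            have h3 : 0 < Real.exp (-(a n*t)) := Real.exp_pos _
            rw [Real.norm_eq_abs, abs_mul, abs_mul,
              abs_of_nonneg (Real.exp_pos (-(s*t))).le,
              abs_of_nonneg (by linarith : (0:ℝ) ≤ 1 - Real.exp (-(a n*t)))]
            have h5 : |c n| * (1 - Real.exp (-(a n*t))) ≤ |c n| := by
              nlinarith [mul_nonneg (abs_nonneg (c n)) h3.le]
            have h6 : (0:ℝ) ≤ |c n| * (1 - Real.exp (-(a n*t))) :=
              mul_nonneg (abs_nonneg _) (by linarith)
            exact le_trans (mul_le_of_le_one_left h6 h1) h5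
        _ = |c n| * τ := by
            simp [Real.volume_Ioc]
            rw [max_eq_left hτ0.le]
            ring
    simp only [hfc1]
    have hrw : ∀ t : ℝ, Real.exp (-(s*t)) * (C * ∑' n, c n * (1 - Real.exp (-(a n * t))))
        = C * ∑' n, Real.exp (-(s*t)) * (c n * (1 - Real.exp (-(a n * t)))) := by
      intro t
      rw [tsum_mul_left]
      ring
    show ∫ t in (0:ℝ)..τ, Real.exp (-(s*t)) * (C * ∑' n, c n * (1 - Real.exp (-(a n * t)))) = _
    simp_rw [hrw]
    rw [intervalIntegral.integral_const_mul]
    congr 1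
    rw [intervalIntegral.integral_of_le hτ0.le,
      ← MeasureTheory.integral_tsum_of_summable_integral_norm hF1int hF1norm]
    apply tsum_congr
    intro n
    rw [← intervalIntegral.integral_of_le hτ0.le]
    have hpt : ∀ t : ℝ, Real.exp (-(s*t)) * (c n * (1 - Real.exp (-(a n * t))))
        = c n * (Real.exp (-(s*t)) - Real.exp (-((s + a n)*t))) := by
      intro t
      rw [show -((s + a n)*t) = -(s*t) + -(a n*t) by ring, Real.exp_add]
      ring
    simp_rw [hpt]
    rw [intervalIntegral.integral_const_mul,
      intervalIntegral.integral_sub ((aux_cont s).intervalIntegrable _ _)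
        ((aux_cont (s + a n)).intervalIntegrable _ _),
      aux_int_Icc s τ hs, aux_int_Icc (s + a n) τ (hsa n)]
  -- Part 2
  have hI2 : (∫ t in Set.Ioi τ, Real.exp (-(s * t)) * fc2 t)
      = C * ∑' n, c n * ((Real.exp (-(s*τ)) - Real.exp (-((s + a n)*τ)))/(s + a n)) := by
    simp only [hfc2]
    have hrw2 : ∀ (n : ℕ) (t : ℝ),
        Real.exp (-(s*t)) * (c n * (Real.exp (-(a n * (t - τ))) - Real.exp (-(a n * t))))
        = (c n * (Real.exp (a n * τ) - 1)) * Real.exp (-((s + a n)*t)) := by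
      intro n t
      rw [show -(a n * (t - τ)) = a n * τ + -(a n * t) by ring, Real.exp_add,
        show -((s + a n)*t) = -(s*t) + -(a n * t) by ring, Real.exp_add]
      ring
    have hkey : ∀ t : ℝ, Real.exp (-(s*t)) * (C * ∑' n,
        c n * (Real.exp (-(a n * (t - τ))) - Real.exp (-(a n * t))))
        = C * ∑' n, (c n * (Real.exp (a n * τ) - 1)) * Real.exp (-((s + a n)*t)) := by
      intro t
      calc Real.exp (-(s*t)) * (C * ∑' n,
            c n * (Real.exp (-(a n * (t - τ))) - Real.exp (-(a n * t))))
          = C * ∑' n, Real.exp (-(s*t)) *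
            (c n * (Real.exp (-(a n * (t - τ))) - Real.exp (-(a n * t)))) := by
            rw [tsum_mul_left]; ring
        _ = C * ∑' n, (c n * (Real.exp (a n * τ) - 1)) * Real.exp (-((s + a n)*t)) := by
            congr 1
            exact tsum_congr fun n => hrw2 n t
    show ∫ t in Set.Ioi τ, Real.exp (-(s*t)) * (C * ∑' n,
        c n * (Real.exp (-(a n * (t - τ))) - Real.exp (-(a n * t)))) = _
    simp_rw [hkey]
    rw [MeasureTheory.integral_const_mul]
    congr 1
    have hint2 : ∀ n : ℕ, IntegrableOn
        (fun t => (c n * (Real.exp (a n * τ) - 1)) * Real.exp (-((s + a n)*t))) (Set.Ioi τ) :=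
      fun n => (aux_intOn (s + a n) τ (hsa n)).const_mul _
    have hEE : ∀ n : ℕ, Real.exp (a n * τ) * Real.exp (-((s + a n)*τ)) = Real.exp (-(s*τ)) := by
      intro n
      rw [← Real.exp_add]
      congr 1
      ring
    have he1 : ∀ n : ℕ, 1 ≤ Real.exp (a n * τ) := by
      intro n
      apply Real.one_le_exp
      have := ha0 n
      positivity
    have hEa1 : ∀ n : ℕ, Real.exp (-((s + a n)*τ)) ≤ 1 := by
      intro n
      rw [Real.exp_le_one_iff]
      nlinarith [hsa n]
    have hnorm2 : Summable (fun n => ∫ t in Set.Ioi τ,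
        ‖(c n * (Real.exp (a n * τ) - 1)) * Real.exp (-((s + a n)*t))‖) := by
      apply Summable.of_nonneg_of_le (fun n => integral_nonneg fun t => norm_nonneg _) _
        (hsum.mul_right (1/s))
      intro n
      have h1 : (∫ t in Set.Ioi τ, ‖(c n * (Real.exp (a n * τ) - 1)) * Real.exp (-((s + a n)*t))‖)
          = |c n * (Real.exp (a n * τ) - 1)| * (Real.exp (-((s + a n)*τ))/(s + a n)) := by
        simp_rw [norm_mul, Real.norm_eq_abs, abs_of_pos (Real.exp_pos _)]
        rw [MeasureTheory.integral_const_mul, aux_int_Ioi _ _ (hsa n), abs_mul]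
      rw [h1, abs_mul, abs_of_nonneg (by linarith [he1 n] : (0:ℝ) ≤ Real.exp (a n * τ) - 1),
        mul_assoc]
      apply mul_le_mul_of_nonneg_left _ (abs_nonneg _)
      have h2 : (Real.exp (a n * τ) - 1) * (Real.exp (-((s + a n)*τ))/(s + a n))
          = (Real.exp (-(s*τ)) - Real.exp (-((s + a n)*τ)))/(s + a n) := by
        rw [show (Real.exp (a n * τ) - 1) * (Real.exp (-((s + a n)*τ))/(s + a n))
            = (Real.exp (a n * τ) * Real.exp (-((s + a n)*τ)) - Real.exp (-((s + a n)*τ)))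
              /(s + a n) by ring, hEE n]
      rw [h2]
      apply div_le_div₀ (by norm_num)
        (by nlinarith [Real.exp_pos (-((s + a n)*τ))]) hs (by linarith [ha0 n])
    rw [← MeasureTheory.integral_tsum_of_summable_integral_norm hint2 hnorm2]
    apply tsum_congr
    intro n
    rw [MeasureTheory.integral_const_mul, aux_int_Ioi _ _ (hsa n), ← hEE n]
    ring
  -- Summability of the two closed-form series
  have hbound : ∀ (x : ℝ), 0 < x → s ≤ x → ∀ (e : ℝ), 0 < e → e ≤ 1 →
      |(1 - e)/x| ≤ 1/s := by
    intro x hx hsx e he0 he1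
    rw [abs_of_nonneg (div_nonneg (by linarith) hx.le)]
    apply div_le_div₀ (by norm_num) (by linarith) hs hsx
  have hu : Summable (fun n => c n * ((1 - Real.exp (-(s*τ)))/s
      - (1 - Real.exp (-((s + a n)*τ)))/(s + a n))) := by
    apply Summable.of_norm_bounded (hsum.mul_right (2/s))
    intro n
    have h1 := hbound s hs le_rfl _ hE0 hE1
    have h2 := hbound (s + a n) (hsa n) (by linarith [ha0 n])
      (Real.exp (-((s + a n)*τ))) (Real.exp_pos _)
      (by rw [Real.exp_le_one_iff]; nlinarith [hsa n])
    rw [Real.norm_eq_abs, abs_mul]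
    calc |c n| * |(1 - Real.exp (-(s*τ)))/s - (1 - Real.exp (-((s + a n)*τ)))/(s + a n)|
        ≤ |c n| * (1/s + 1/s) := by
          apply mul_le_mul_of_nonneg_left _ (abs_nonneg _)
          calc |(1 - Real.exp (-(s*τ)))/s - (1 - Real.exp (-((s + a n)*τ)))/(s + a n)|
              ≤ |(1 - Real.exp (-(s*τ)))/s| + |(1 - Real.exp (-((s + a n)*τ)))/(s + a n)| :=
                abs_sub _ _
            _ ≤ 1/s + 1/s := add_le_add h1 h2
      _ = |c n| * (2/s) := by ring
  have hv : Summable (fun n => c n * ((Real.exp (-(s*τ))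
      - Real.exp (-((s + a n)*τ)))/(s + a n))) := by
    apply Summable.of_norm_bounded (hsum.mul_right (1/s))
    intro n
    rw [Real.norm_eq_abs, abs_mul]
    apply mul_le_mul_of_nonneg_left _ (abs_nonneg _)
    have hle : Real.exp (-((s + a n)*τ)) ≤ Real.exp (-(s*τ)) := by
      apply Real.exp_le_exp.mpr; nlinarith [ha0 n]
    rw [abs_of_nonneg (div_nonneg (sub_nonneg.mpr hle) (hsa n).le)]
    apply div_le_div₀ (by norm_num)
      (by nlinarith [Real.exp_pos (-((s + a n)*τ))]) hs (by linarith [ha0 n])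
  rw [hI1, hI2, ← mul_add, ← Summable.tsum_add hu hv]
  rw [show τ * s = s * τ from mul_comm τ s]
  rw [← tsum_mul_left, ← tsum_mul_left]
  apply tsum_congr
  intro n
  have hden : 2 * lam n * rT - Real.sin (2 * lam n * rT) ≠ 0 := sub_ne_zero.mpr (hne n)
  have hl : lam n ≠ 0 := (hlam n).ne'
  have hsan : s + a n ≠ 0 := (hsa n).ne'
  have hDvs : Dv * lam n ^ 2 + s ≠ 0 := by nlinarith [ha0 n]
  simp only [ha] at hsan ⊢
  rw [hc n, hCdef]
  field_simp
  ring
end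

section
/- For every s > max(0, ζ) with s ≠ ζ, the Laplace transform of H satisfies ∫₀^∞ e^{−s t} H(t) dt = w/(s √(D_σ (k_d + s))) − w γ (√(s + k_d) − γ √D_σ)/(√(s + k_d) (s − ζ) ζ) − (w γ²/(ζ s)) √(D_σ/(k_d + s)) + w γ/(ζ s). (Equation (36) of Appendix B, the Laplace transform 𝓗(s) of the absorption fraction H(t).) -/
open MeasureTheory Filter Topology

noncomputable def erf (x : ℝ) : ℝ := (2 / Real.sqrt Real.pi) * ∫ u in (0:ℝ)..x, Real.exp (-u ^ 2)

noncomputable def erfc (x : ℝ) : ℝ := 1 - erf x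

lemma erf_hasDerivAt (x : ℝ) :
    HasDerivAt erf (2 / Real.sqrt Real.pi * Real.exp (-x ^ 2)) x := by
  have hc : Continuous fun u : ℝ => Real.exp (-u ^ 2) := by continuity
  have h := intervalIntegral.integral_hasDerivAt_right
    (hc.intervalIntegrable 0 x) hc.stronglyMeasurable.stronglyMeasurableAtFilter
    hc.continuousAt
  exact h.const_mul (2 / Real.sqrt Real.pi)

lemma erf_continuous : Continuous erf :=
  continuous_iff_continuousAt.mpr fun x => (erf_hasDerivAt x).continuousAt

lemma erf_zero : erf 0 = 0 := by simp [erf]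

lemma sqrt_pi_pos : 0 < Real.sqrt Real.pi := Real.sqrt_pos.mpr Real.pi_pos

lemma integrable_gauss : IntegrableOn (fun u : ℝ => Real.exp (-u ^ 2)) (Set.Ioi 0) := by
  have := (integrable_exp_neg_mul_sq (b := 1) one_pos).integrableOn (s := Set.Ioi 0)
  simpa using this

lemma gauss_integral : ∫ u in Set.Ioi (0:ℝ), Real.exp (-u ^ 2) = Real.sqrt Real.pi / 2 := by
  have := integral_gaussian_Ioi 1
  simpa using this

lemma erf_tendsto_one : Tendsto erf atTop (𝓝 1) := by
  have h1 : Tendsto (fun x : ℝ => ∫ u in (0:ℝ)..x, Real.exp (-u ^ 2)) atTop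
      (𝓝 (∫ u in Set.Ioi (0:ℝ), Real.exp (-u ^ 2))) :=
    intervalIntegral_tendsto_integral_Ioi 0 integrable_gauss tendsto_id
  have h2 := h1.const_mul (2 / Real.sqrt Real.pi)
  rw [gauss_integral] at h2
  have : 2 / Real.sqrt Real.pi * (Real.sqrt Real.pi / 2) = 1 := by
    field_simp
  rw [this] at h2
  exact h2

lemma erf_nonneg {x : ℝ} (hx : 0 ≤ x) : 0 ≤ erf x := by
  have : 0 ≤ ∫ u in (0:ℝ)..x, Real.exp (-u ^ 2) :=
    intervalIntegral.integral_nonneg hx (fun u _ => (Real.exp_pos _).le)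
  have h0 : (0:ℝ) ≤ 2 / Real.sqrt Real.pi := by positivity
  exact mul_nonneg h0 this

lemma erf_le_one {x : ℝ} (hx : 0 ≤ x) : erf x ≤ 1 := by
  have h1 : ∫ u in (0:ℝ)..x, Real.exp (-u ^ 2) ≤ ∫ u in Set.Ioi (0:ℝ), Real.exp (-u ^ 2) := by
    rw [intervalIntegral.integral_of_le hx]
    exact setIntegral_mono_set integrable_gauss
      (Filter.Eventually.of_forall fun u => (Real.exp_pos _).le)
      (HasSubset.Subset.eventuallyLE Set.Ioc_subset_Ioi_self)
  calc erf x ≤ 2 / Real.sqrt Real.pi * (Real.sqrt Real.pi / 2) := by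
        rw [erf]
        exact mul_le_mul_of_nonneg_left (h1.trans_eq gauss_integral) (by positivity)
    _ = 1 := by field_simp

lemma erf_sqrt_hasDerivAt {c t : ℝ} (ht : 0 < t) :
    HasDerivAt (fun t => erf (c * Real.sqrt t))
      (2 / Real.sqrt Real.pi * Real.exp (-(c ^ 2 * t)) * (c * (1 / (2 * Real.sqrt t)))) t := by
  have hsq : HasDerivAt Real.sqrt (1 / (2 * Real.sqrt t)) t := Real.hasDerivAt_sqrt ht.ne'
  have h := (erf_hasDerivAt (c * Real.sqrt t)).comp t (hsq.const_mul c)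
  have he : (c * Real.sqrt t) ^ 2 = c ^ 2 * t := by
    rw [mul_pow, Real.sq_sqrt ht.le]
  simpa [he, mul_comm, mul_assoc, mul_left_comm, Function.comp_def] using h

lemma laplace_exp_integrable {p : ℝ} (hp : 0 < p) :
    IntegrableOn (fun t : ℝ => Real.exp (-(p * t))) (Set.Ioi 0) := by
  simpa [mul_comm] using exp_neg_integrableOn_Ioi 0 hp

lemma laplace_erf_integrable {p c : ℝ} (hp : 0 < p) (hc : 0 ≤ c) :
    IntegrableOn (fun t : ℝ => Real.exp (-(p * t)) * erf (c * Real.sqrt t)) (Set.Ioi 0) := by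
  refine MeasureTheory.Integrable.mono (laplace_exp_integrable hp) ?_ ?_
  · exact ((Real.continuous_exp.comp (by continuity)).mul
      (erf_continuous.comp (by continuity))).aestronglyMeasurable
  · rw [ae_restrict_iff' measurableSet_Ioi]
    refine Filter.Eventually.of_forall fun t ht => ?_
    have h0 : 0 ≤ c * Real.sqrt t := mul_nonneg hc (Real.sqrt_nonneg _)
    have h1 : 0 ≤ erf (c * Real.sqrt t) := erf_nonneg h0
    have h2 : erf (c * Real.sqrt t) ≤ 1 := erf_le_one h0
    rw [Real.norm_eq_abs, Real.norm_eq_abs, abs_of_nonneg (mul_nonneg (Real.exp_pos _).le h1),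
      abs_of_nonneg (Real.exp_pos _).le]
    nlinarith [Real.exp_pos (-(p * t))]

lemma laplace_exp {p : ℝ} (hp : 0 < p) :
    ∫ t in Set.Ioi (0:ℝ), Real.exp (-(p * t)) = 1 / p := by
  have hderiv : ∀ t ∈ Set.Ioi (0:ℝ), HasDerivAt (fun t => -Real.exp (-(p * t)) / p)
      (Real.exp (-(p * t))) t := by
    intro t _
    have h : HasDerivAt (fun t : ℝ => -(p * t)) (-p) t := by
      have := ((hasDerivAt_id t).const_mul p).neg
      simp only [id_eq, mul_one] at this
      exact this
    have := ((h.exp).neg).div_const p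
    refine this.congr_deriv ?_
    field_simp
  have htend : Tendsto (fun t : ℝ => -Real.exp (-(p * t)) / p) atTop (𝓝 0) := by
    have h1 : Tendsto (fun t : ℝ => -(p * t)) atTop atBot :=
      tendsto_neg_atTop_atBot.comp ((tendsto_const_mul_atTop_of_pos hp).mpr tendsto_id)
    have := (Real.tendsto_exp_atBot.comp h1).neg.div_const p
    simpa using this
  have := integral_Ioi_of_hasDerivAt_of_tendsto
    (Continuous.continuousWithinAt (by continuity)) hderiv (laplace_exp_integrable hp) htend
  rw [this]
  simp [Real.exp_zero]
  field_simp

lemma laplace_erf {p c : ℝ} (hp : 0 < p) (hc : 0 < c) :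
    ∫ t in Set.Ioi (0:ℝ), Real.exp (-(p * t)) * erf (c * Real.sqrt t) =
      c / (p * Real.sqrt (p + c ^ 2)) := by
  set q : ℝ := p + c ^ 2 with hq
  have hq0 : 0 < q := by positivity
  have hsq0 : 0 < Real.sqrt q := Real.sqrt_pos.mpr hq0
  set G : ℝ → ℝ := fun t => -(Real.exp (-(p * t)) * erf (c * Real.sqrt t)) / p
    + c / (p * Real.sqrt q) * erf (Real.sqrt q * Real.sqrt t) with hG
  have hderiv : ∀ t ∈ Set.Ioi (0:ℝ), HasDerivAt G
      (Real.exp (-(p * t)) * erf (c * Real.sqrt t)) t := by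
    intro t ht
    have ht : 0 < t := ht
    have hst : 0 < Real.sqrt t := Real.sqrt_pos.mpr ht
    have hexp : HasDerivAt (fun t : ℝ => Real.exp (-(p * t))) (Real.exp (-(p * t)) * (-p)) t := by
      have h : HasDerivAt (fun t : ℝ => -(p * t)) (-p) t := by
        have := ((hasDerivAt_id t).const_mul p).neg
        simp only [id_eq, mul_one] at this
        exact this
      exact h.exp
    have h1 := erf_sqrt_hasDerivAt (c := c) ht
    have h2 := erf_sqrt_hasDerivAt (c := Real.sqrt q) ht
    have h2' : HasDerivAt (fun t => erf (Real.sqrt q * Real.sqrt t))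
        (2 / Real.sqrt Real.pi * Real.exp (-(q * t)) * (Real.sqrt q * (1 / (2 * Real.sqrt t)))) t := by
      simpa [Real.sq_sqrt hq0.le] using h2
    have hd := (((hexp.mul h1).neg.div_const p).add (h2'.const_mul (c / (p * Real.sqrt q))))
    refine hd.congr_deriv ?_
    have hqe : Real.exp (-(q * t)) = Real.exp (-(p * t)) * Real.exp (-(c ^ 2 * t)) := by
      rw [← Real.exp_add, hq]; ring_nf
    rw [hqe]
    field_simp
    ring
  have hint := laplace_erf_integrable hp hc.le
  have htend : Tendsto G atTop (𝓝 (c / (p * Real.sqrt q))) := by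
    have hsqrtTop : Tendsto Real.sqrt atTop atTop :=
      Tendsto.congr (fun x => (Real.sqrt_eq_rpow x).symm)
        (tendsto_rpow_atTop (y := (1:ℝ)/2) (by norm_num))
    have hc1 : Tendsto (fun t : ℝ => c * Real.sqrt t) atTop atTop :=
      (tendsto_const_mul_atTop_of_pos hc).mpr hsqrtTop
    have hc2 : Tendsto (fun t : ℝ => Real.sqrt q * Real.sqrt t) atTop atTop :=
      (tendsto_const_mul_atTop_of_pos hsq0).mpr hsqrtTop
    have he1 : Tendsto (fun t : ℝ => erf (c * Real.sqrt t)) atTop (𝓝 1) :=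
      erf_tendsto_one.comp hc1
    have he2 : Tendsto (fun t : ℝ => erf (Real.sqrt q * Real.sqrt t)) atTop (𝓝 1) :=
      erf_tendsto_one.comp hc2
    have hexp0 : Tendsto (fun t : ℝ => Real.exp (-(p * t))) atTop (𝓝 0) := by
      have h1 : Tendsto (fun t : ℝ => -(p * t)) atTop atBot :=
        tendsto_neg_atTop_atBot.comp ((tendsto_const_mul_atTop_of_pos hp).mpr tendsto_id)
      exact Real.tendsto_exp_atBot.comp h1
    have := (((hexp0.mul he1).neg.div_const p).add (he2.const_mul (c / (p * Real.sqrt q))))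
    simpa using this
  have hcont : ContinuousWithinAt G (Set.Ici 0) 0 := by
    apply Continuous.continuousWithinAt
    apply Continuous.add
    · exact ((Real.continuous_exp.comp (by continuity)).mul
        (erf_continuous.comp (by continuity))).neg.div_const p
    · exact (continuous_const.mul (erf_continuous.comp (by continuity)))
  have := integral_Ioi_of_hasDerivAt_of_tendsto hcont hderiv hint htend
  rw [this, hG]
  simp [erf_zero]

theorem stmt_6
    (Dσ kd γ w : ℝ) (hDσ : 0 < Dσ) (hkd : 0 < kd) (hγ : 0 < γ)
    (ζ : ℝ) (hζdef : ζ = γ ^ 2 * Dσ - kd) (hζ : ζ ≠ 0)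
    (H : ℝ → ℝ)
    (hH : ∀ t, 0 < t → H t = w / Real.sqrt (kd * Dσ) * erf (Real.sqrt (kd * t)) -
          w * γ / ζ * (Real.exp (ζ * t) * erfc (γ * Real.sqrt (Dσ * t)) +
            γ * Real.sqrt (Dσ / kd) * erf (Real.sqrt (kd * t)) - 1))
    (s : ℝ) (hs : max 0 ζ < s) (hsζ : s ≠ ζ) :
    ∫ t in Set.Ioi (0:ℝ), Real.exp (-(s * t)) * H t =
      w / (s * Real.sqrt (Dσ * (kd + s))) -
        w * γ * (Real.sqrt (s + kd) - γ * Real.sqrt Dσ) / (Real.sqrt (s + kd) * (s - ζ) * ζ) -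
        w * γ ^ 2 / (ζ * s) * Real.sqrt (Dσ / (kd + s)) + w * γ / (ζ * s) := by
  have hs0 : 0 < s := lt_of_le_of_lt (le_max_left 0 ζ) hs
  have hp : 0 < s - ζ := sub_pos.mpr (lt_of_le_of_lt (le_max_right 0 ζ) hs)
  set b : ℝ := γ * Real.sqrt Dσ with hb
  have hb0 : 0 < b := mul_pos hγ (Real.sqrt_pos.mpr hDσ)
  set k : ℝ := Real.sqrt kd with hk
  have hk0 : 0 < k := Real.sqrt_pos.mpr hkd
  have hskd : 0 < s + kd := by linarith
  have hsumb : (s - ζ) + b ^ 2 = s + kd := by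
    rw [hb, mul_pow, Real.sq_sqrt hDσ.le, hζdef]; ring
  have hsumk : s + k ^ 2 = s + kd := by rw [hk, Real.sq_sqrt hkd.le]
  set C1 : ℝ := w / Real.sqrt (kd * Dσ) - w * γ / ζ * (γ * Real.sqrt (Dσ / kd)) with hC1
  set C : ℝ := w * γ / ζ with hC
  have hcongr : Set.EqOn (fun t => Real.exp (-(s * t)) * H t)
      (fun t => C1 * (Real.exp (-(s * t)) * erf (k * Real.sqrt t))
        + C * (Real.exp (-((s - ζ) * t)) * erf (b * Real.sqrt t))
        + (-C) * Real.exp (-((s - ζ) * t)) + C * Real.exp (-(s * t))) (Set.Ioi 0) := by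
    intro t ht
    have ht : (0:ℝ) < t := ht
    simp only
    rw [hH t ht, erfc, Real.sqrt_mul hkd.le t, Real.sqrt_mul hDσ.le, ← hk]
    have he : Real.exp (ζ * t) = Real.exp (-((s - ζ) * t)) / Real.exp (-(s * t)) := by
      rw [eq_div_iff (Real.exp_ne_zero _), ← Real.exp_add]; ring_nf
    rw [he, hC1, hC, hb, Real.sqrt_mul hkd.le Dσ, Real.sqrt_div hDσ.le, ← hk]
    field_simp
    ring
  rw [setIntegral_congr_fun measurableSet_Ioi hcongr]
  have I1 := laplace_erf_integrable hs0 hk0.le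
  have I2 := laplace_erf_integrable hp hb0.le
  have I3 := laplace_exp_integrable hp
  have I4 := laplace_exp_integrable hs0
  have e1 := laplace_erf hs0 hk0
  have e2 := laplace_erf hp hb0
  have e3 := laplace_exp hp
  have e4 := laplace_exp hs0
  rw [hsumk] at e1
  rw [hsumb] at e2
  have J2 : IntegrableOn (fun x => C1 * (Real.exp (-(s * x)) * erf (k * Real.sqrt x))
      + C * (Real.exp (-((s - ζ) * x)) * erf (b * Real.sqrt x))) (Set.Ioi 0) :=
    (I1.const_mul C1).add (I2.const_mul C)
  have J3 : IntegrableOn (fun x => C1 * (Real.exp (-(s * x)) * erf (k * Real.sqrt x))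
      + C * (Real.exp (-((s - ζ) * x)) * erf (b * Real.sqrt x))
      + (-C) * Real.exp (-((s - ζ) * x))) (Set.Ioi 0) := J2.add (I3.const_mul (-C))
  rw [MeasureTheory.integral_add J3 (I4.const_mul C),
      MeasureTheory.integral_add J2 (I3.const_mul (-C)),
      MeasureTheory.integral_add (I1.const_mul C1) (I2.const_mul C),
      MeasureTheory.integral_const_mul, MeasureTheory.integral_const_mul,
      MeasureTheory.integral_const_mul, MeasureTheory.integral_const_mul, e1, e2, e3, e4]
  rw [show kd + s = s + kd from add_comm _ _, Real.sqrt_mul hDσ.le,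
      Real.sqrt_div hDσ.le, hC1, hC, hb, Real.sqrt_mul hkd.le, ← hk,
      Real.sqrt_div hDσ.le, ← hk]
  set D : ℝ := Real.sqrt Dσ with hD
  have hD0 : 0 < D := Real.sqrt_pos.mpr hDσ
  set K : ℝ := Real.sqrt (s + kd) with hK
  have hK0 : 0 < K := Real.sqrt_pos.mpr hskd
  field_simp
  ring
end

section
/- Let f : (0,∞) → ℝ be Lebesgue integrable with ∫₀^∞ f(u) du = A, and let h : (0,∞) → ℝ be measurable and bounded with lim_{t→∞} h(t) = L. Then the finite convolution converges: lim_{t→∞} ∫₀^t f(u) h(t − u) du = A · L. (Final-value principle for finite convolutions, the analytic content of the final-value-theorem step used in the proofs of Corollary 1 and Theorem 4.) -/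
open MeasureTheory Filter Topology

theorem stmt_9 (f h : ℝ → ℝ) (A L M : ℝ)
    (hf : IntegrableOn f (Set.Ioi 0))
    (hA : ∫ u in Set.Ioi (0:ℝ), f u = A)
    (hmeas : Measurable h)
    (hM : ∀ u, 0 < u → |h u| ≤ M)
    (hL : Tendsto h atTop (𝓝 L)) :
    Tendsto (fun t => ∫ u in (0:ℝ)..t, f u * h (t - u)) atTop (𝓝 (A * L)) := by
  have hM0 : 0 ≤ M := le_trans (abs_nonneg _) (hM 1 one_pos)
  set F : ℝ → ℝ → ℝ := fun t u =>
    Set.indicator (Set.Ioo 0 t) (fun u => f u * h (t - u)) u with hF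
  have key : Tendsto (fun t => ∫ u in Set.Ioi (0:ℝ), F t u) atTop
      (𝓝 (∫ u in Set.Ioi (0:ℝ), f u * L)) := by
    apply MeasureTheory.tendsto_integral_filter_of_dominated_convergence
      (bound := fun u => M * |f u|)
    · filter_upwards with t
      exact ((hf.1.mul
        ((hmeas.comp (measurable_const.sub measurable_id)).aestronglyMeasurable)).indicator
        measurableSet_Ioo)
    · filter_upwards with t
      filter_upwards with u
      by_cases hu : u ∈ Set.Ioo (0:ℝ) t
      · simp only [hF, Set.indicator_of_mem hu]
        rw [Real.norm_eq_abs, abs_mul, mul_comm]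
        exact mul_le_mul (hM _ (sub_pos.2 hu.2)) le_rfl (abs_nonneg _) hM0
      · simp only [hF, Set.indicator_of_notMem hu, norm_zero]
        positivity
    · exact (hf.norm.const_mul M)
    · rw [ae_restrict_iff' measurableSet_Ioi]
      filter_upwards with u hu
      have h1 : ∀ᶠ t in atTop, F t u = f u * h (t - u) := by
        filter_upwards [eventually_gt_atTop u] with t ht
        exact Set.indicator_of_mem (Set.mem_Ioo.2 ⟨hu, ht⟩) _
      have h2 : Tendsto (fun t => f u * h (t - u)) atTop (𝓝 (f u * L)) := by
        refine tendsto_const_nhds.mul (hL.comp ?_)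
        exact tendsto_atTop_add_const_right atTop (-u) tendsto_id
      exact h2.congr' (h1.mono fun t e => e.symm)
  have heq : ∫ u in Set.Ioi (0:ℝ), f u * L = A * L := by
    rw [integral_mul_const, hA]
  rw [heq] at key
  refine key.congr' ?_
  filter_upwards [eventually_gt_atTop (0:ℝ)] with t ht
  rw [hF]
  rw [integral_indicator measurableSet_Ioo, Measure.restrict_restrict measurableSet_Ioo,
    Set.inter_eq_left.2 (Set.Ioo_subset_Ioi_self),
    intervalIntegral.integral_of_le ht.le, ← integral_Ioc_eq_integral_Ioo]
end

section
/- The series f_{c,1} and f_{c,2} may be differentiated term by term: for every t with 0 < t < τ, f_{c,1} is differentiable at t with derivative (4 r_T² k_f μ/N_v) Σ_n c_n λ_n² exp(−D_v λ_n² t); and for every t > τ, f_{c,2} is differentiable at t with derivative (4 r_T² k_f μ/N_v) Σ_n c_n λ_n² (exp(−D_v λ_n² t) − exp(−D_v λ_n² (t−τ))). (Derivation of the release-rate derivative f_{c,d} in Corollary 3, Eq. (12).) -/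
open MeasureTheory Filter Topology

theorem stmt_11
    (rT kf μ Nv Dv : ℝ)
    (hrT : 0 < rT) (hkf : 0 < kf) (hμ : 0 < μ) (hNv : 0 < Nv) (hDv : 0 < Dv)
    (τ : ℝ) (hτ : τ = Nv / μ)
    (C : ℝ) (hCdef : C = 4 * rT ^ 2 * kf * μ / (Nv * Dv))
    (lam : ℕ → ℝ) (hlam : ∀ n, 0 < lam n)
    (hne : ∀ n, 2 * lam n * rT ≠ Real.sin (2 * lam n * rT))
    (c : ℕ → ℝ)
    (hc : ∀ n, c n = lam n * (Real.sin (lam n * rT) / (lam n * rT)) /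
          (2 * lam n * rT - Real.sin (2 * lam n * rT)))
    (hsum : Summable fun n => |c n|)
    (fc1 : ℝ → ℝ)
    (hfc1 : ∀ t, fc1 t = C * ∑' n, c n * (1 - Real.exp (-(Dv * lam n ^ 2 * t))))
    (fc2 : ℝ → ℝ)
    (hfc2 : ∀ t, fc2 t = C * ∑' n, c n *
          (Real.exp (-(Dv * lam n ^ 2 * (t - τ))) - Real.exp (-(Dv * lam n ^ 2 * t))))
    :
    (∀ t, 0 < t → t < τ → HasDerivAt fc1
        (4 * rT ^ 2 * kf * μ / Nv * ∑' n, c n * lam n ^ 2 * Real.exp (-(Dv * lam n ^ 2 * t))) t) ∧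
    (∀ t, τ < t → HasDerivAt fc2
        (4 * rT ^ 2 * kf * μ / Nv * ∑' n, c n * lam n ^ 2 *
          (Real.exp (-(Dv * lam n ^ 2 * t)) - Real.exp (-(Dv * lam n ^ 2 * (t - τ))))) t) := by
  have hτpos : 0 < τ := by rw [hτ]; positivity
  have bound : ∀ a s : ℝ, 0 ≤ a → 0 < s → a * Real.exp (-(a * s)) ≤ 1 / s := by
    intro a s ha hs
    have h1 : a * s ≤ Real.exp (a * s) := by
      have := Real.add_one_le_exp (a * s); linarith
    have h2 : a * s * Real.exp (-(a * s)) ≤ 1 := by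
      have h3 : Real.exp (a * s) * Real.exp (-(a * s)) = 1 := by
        rw [← Real.exp_add]; simp
      calc a * s * Real.exp (-(a * s))
          ≤ Real.exp (a * s) * Real.exp (-(a * s)) :=
            mul_le_mul_of_nonneg_right h1 (Real.exp_nonneg _)
        _ = 1 := h3
    rw [le_div_iff₀ hs]
    nlinarith [Real.exp_nonneg (-(a * s))]
  have hCD : C * Dv = 4 * rT ^ 2 * kf * μ / Nv := by
    rw [hCdef]; field_simp
  constructor
  · intro t ht0 htτ
    set s : Set ℝ := Set.Ioi (t / 2) with hs
    have hts : t ∈ s := by simp [hs]; linarith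
    set g : ℕ → ℝ → ℝ := fun n y => c n * (1 - Real.exp (-(Dv * lam n ^ 2 * y))) with hgdef
    set g' : ℕ → ℝ → ℝ :=
      fun n y => c n * (Dv * lam n ^ 2 * Real.exp (-(Dv * lam n ^ 2 * y))) with hg'def
    have hg : ∀ n y, y ∈ s → HasDerivAt (g n) (g' n y) y := by
      intro n y _
      have h1 : HasDerivAt (fun y : ℝ => Dv * lam n ^ 2 * y) (Dv * lam n ^ 2) y := by
        simpa using (hasDerivAt_id y).const_mul (Dv * lam n ^ 2)
      have h2 := h1.neg.exp
      have h3 := (h2.const_sub 1).const_mul (c n)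
      refine h3.congr_deriv ?_
      simp only [hg'def, Pi.neg_apply]
      ring
    have hu : Summable (fun n => |c n| * (2 / t)) := hsum.mul_right _
    have hg' : ∀ n y, y ∈ s → ‖g' n y‖ ≤ |c n| * (2 / t) := by
      intro n y hy
      have hy' : t / 2 < y := hy
      have hypos : 0 < y := by linarith
      have ha : (0:ℝ) ≤ Dv * lam n ^ 2 := by positivity
      have hb := bound (Dv * lam n ^ 2) y ha hypos
      have h1y : 1 / y ≤ 2 / t := by
        rw [div_le_div_iff₀ hypos ht0]; linarith
      have hpos : 0 ≤ Dv * lam n ^ 2 * Real.exp (-(Dv * lam n ^ 2 * y)) := by positivity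
      rw [hg'def, Real.norm_eq_abs, abs_mul, abs_of_nonneg hpos]
      exact mul_le_mul_of_nonneg_left (hb.trans h1y) (abs_nonneg _)
    have hg0 : Summable fun n => g n t := by
      apply Summable.of_norm_bounded hsum
      intro n
      rw [hgdef, Real.norm_eq_abs, abs_mul]
      have he : Real.exp (-(Dv * lam n ^ 2 * t)) ≤ 1 := by
        rw [Real.exp_le_one_iff]
        have : 0 ≤ Dv * lam n ^ 2 * t := by positivity
        linarith
      have he0 : 0 < Real.exp (-(Dv * lam n ^ 2 * t)) := Real.exp_pos _
      have : |1 - Real.exp (-(Dv * lam n ^ 2 * t))| ≤ 1 := by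
        rw [abs_of_nonneg (by linarith)]; linarith
      calc |c n| * |1 - Real.exp (-(Dv * lam n ^ 2 * t))| ≤ |c n| * 1 :=
            mul_le_mul_of_nonneg_left this (abs_nonneg _)
        _ = |c n| := mul_one _
    have H := hasDerivAt_tsum_of_isPreconnected hu isOpen_Ioi isPreconnected_Ioi
      hg hg' hts hg0 hts
    have H2 := H.const_mul C
    have hfun : fc1 = fun z => C * ∑' n, g n z := funext fun z => hfc1 z
    rw [hfun, ← hCD]
    refine H2.congr_deriv (Eq.symm ?_)
    rw [mul_assoc]
    congr 1
    rw [← tsum_mul_left]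
    exact tsum_congr fun n => by rw [hg'def]; ring
  · intro t htτ
    have ht0 : 0 < t := lt_trans hτpos htτ
    set s : Set ℝ := Set.Ioi ((t + τ) / 2) with hs
    have hts : t ∈ s := by simp [hs]; linarith
    set g : ℕ → ℝ → ℝ := fun n y => c n *
      (Real.exp (-(Dv * lam n ^ 2 * (y - τ))) - Real.exp (-(Dv * lam n ^ 2 * y))) with hgdef
    set g' : ℕ → ℝ → ℝ := fun n y => c n * (Dv * lam n ^ 2 *
      (Real.exp (-(Dv * lam n ^ 2 * y)) - Real.exp (-(Dv * lam n ^ 2 * (y - τ))))) with hg'def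
    have hg : ∀ n y, y ∈ s → HasDerivAt (g n) (g' n y) y := by
      intro n y _
      have h1 : HasDerivAt (fun y : ℝ => Dv * lam n ^ 2 * (y - τ)) (Dv * lam n ^ 2) y := by
        simpa using ((hasDerivAt_id y).sub_const τ).const_mul (Dv * lam n ^ 2)
      have h2 : HasDerivAt (fun y : ℝ => Dv * lam n ^ 2 * y) (Dv * lam n ^ 2) y := by
        simpa using (hasDerivAt_id y).const_mul (Dv * lam n ^ 2)
      have h3 := ((h1.neg.exp).sub (h2.neg.exp)).const_mul (c n)
      refine h3.congr_deriv ?_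
      simp only [hg'def, Pi.neg_apply]
      ring
    have hu : Summable (fun n => |c n| * (2 / t + 2 / (t - τ))) := hsum.mul_right _
    have hg' : ∀ n y, y ∈ s → ‖g' n y‖ ≤ |c n| * (2 / t + 2 / (t - τ)) := by
      intro n y hy
      have hy' : (t + τ) / 2 < y := hy
      have hypos : 0 < y := by linarith
      have hyτ : 0 < y - τ := by linarith
      have ha : (0:ℝ) ≤ Dv * lam n ^ 2 := by positivity
      have hb1 := bound (Dv * lam n ^ 2) y ha hypos
      have hb2 := bound (Dv * lam n ^ 2) (y - τ) ha hyτ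
      have h1y : 1 / y ≤ 2 / t := by
        rw [div_le_div_iff₀ hypos ht0]; linarith
      have h2y : 1 / (y - τ) ≤ 2 / (t - τ) := by
        rw [div_le_div_iff₀ hyτ (by linarith : (0:ℝ) < t - τ)]; linarith
      rw [hg'def, Real.norm_eq_abs, abs_mul]
      apply mul_le_mul_of_nonneg_left _ (abs_nonneg _)
      have habs : |Dv * lam n ^ 2 *
          (Real.exp (-(Dv * lam n ^ 2 * y)) - Real.exp (-(Dv * lam n ^ 2 * (y - τ))))| ≤
          Dv * lam n ^ 2 * Real.exp (-(Dv * lam n ^ 2 * y)) +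
          Dv * lam n ^ 2 * Real.exp (-(Dv * lam n ^ 2 * (y - τ))) := by
        rw [abs_mul, abs_of_nonneg ha]
        calc Dv * lam n ^ 2 *
              |Real.exp (-(Dv * lam n ^ 2 * y)) - Real.exp (-(Dv * lam n ^ 2 * (y - τ)))|
            ≤ Dv * lam n ^ 2 *
              (|Real.exp (-(Dv * lam n ^ 2 * y))| + |Real.exp (-(Dv * lam n ^ 2 * (y - τ)))|) :=
              mul_le_mul_of_nonneg_left (abs_sub _ _) ha
          _ = Dv * lam n ^ 2 * Real.exp (-(Dv * lam n ^ 2 * y)) +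
              Dv * lam n ^ 2 * Real.exp (-(Dv * lam n ^ 2 * (y - τ))) := by
              rw [abs_of_nonneg (Real.exp_nonneg _), abs_of_nonneg (Real.exp_nonneg _)]; ring
      calc |Dv * lam n ^ 2 *
            (Real.exp (-(Dv * lam n ^ 2 * y)) - Real.exp (-(Dv * lam n ^ 2 * (y - τ))))|
          ≤ Dv * lam n ^ 2 * Real.exp (-(Dv * lam n ^ 2 * y)) +
            Dv * lam n ^ 2 * Real.exp (-(Dv * lam n ^ 2 * (y - τ))) := habs
        _ ≤ 1 / y + 1 / (y - τ) := add_le_add hb1 hb2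
        _ ≤ 2 / t + 2 / (t - τ) := add_le_add h1y h2y
    have hg0 : Summable fun n => g n t := by
      apply Summable.of_norm_bounded (hsum.mul_right 2)
      intro n
      rw [hgdef, Real.norm_eq_abs, abs_mul]
      apply mul_le_mul_of_nonneg_left _ (abs_nonneg _)
      have he1 : Real.exp (-(Dv * lam n ^ 2 * (t - τ))) ≤ 1 := by
        rw [Real.exp_le_one_iff]
        have : 0 ≤ Dv * lam n ^ 2 * (t - τ) :=
          mul_nonneg (by positivity) (by linarith)
        linarith
      have he2 : Real.exp (-(Dv * lam n ^ 2 * t)) ≤ 1 := by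
        rw [Real.exp_le_one_iff]
        have : 0 ≤ Dv * lam n ^ 2 * t := by positivity
        linarith
      have := abs_sub (Real.exp (-(Dv * lam n ^ 2 * (t - τ)))) (Real.exp (-(Dv * lam n ^ 2 * t)))
      calc |Real.exp (-(Dv * lam n ^ 2 * (t - τ))) - Real.exp (-(Dv * lam n ^ 2 * t))|
          ≤ |Real.exp (-(Dv * lam n ^ 2 * (t - τ)))| + |Real.exp (-(Dv * lam n ^ 2 * t))| :=
            abs_sub _ _
        _ ≤ 2 := by
            rw [abs_of_nonneg (Real.exp_nonneg _), abs_of_nonneg (Real.exp_nonneg _)]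
            linarith
    have H := hasDerivAt_tsum_of_isPreconnected hu isOpen_Ioi isPreconnected_Ioi
      hg hg' hts hg0 hts
    have H2 := H.const_mul C
    have hfun : fc2 = fun z => C * ∑' n, g n z := funext fun z => hfc2 z
    rw [hfun, ← hCD]
    refine H2.congr_deriv (Eq.symm ?_)
    rw [mul_assoc]
    congr 1
    rw [← tsum_mul_left]
    exact tsum_congr fun n => by rw [hg'def]; ring
end

section
/- For all 0 < r_T < r_0, r_R > 0, D_σ > 0, k_d ≥ 0 and t > 0, the surface average of P_α over the transmitter sphere evaluates in closed form: (1/(2 r_T)) ∫_{−r_T}^{r_T} P_α(√(r_T² + r_0² − 2 r_0 x), t) dx = (1/(8 r_0 r_T)) [ξ₁(r_0 − r_T, t) + ξ₁(r_T − r_0, t) − ξ₁(r_0 + r_T, t) − ξ₁(−r_0 − r_T, t)] + (D_σ t/(2 r_T r_0)) [ξ₂(r_T + r_0, t) + ξ₂(−r_T − r_0, t) − ξ₂(r_0 − r_T, t) − ξ₂(r_T − r_0, t)]. (Lemma 2, the received signal P_u(t) for uniform simultaneous release from the TX membrane.) -/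
open MeasureTheory Filter Topology

lemma G_hasDerivAt (rR Dσ kd t : ℝ) (hD : 0 < Dσ) (ht : 0 < t) (z : ℝ) :
    HasDerivAt (fun w : ℝ =>
      -(1/4) * ((Real.exp (-((rR - w) ^ 2 / (4 * Dσ * t)) - kd * t) * (rR + w) *
            Real.sqrt (4 * Dσ * t / Real.pi) +
          (rR ^ 2 + 2 * Dσ * t - w ^ 2) * erf ((rR - w) / Real.sqrt (4 * Dσ * t)) *
            Real.exp (-(kd * t)) +
        (Real.exp (-((rR + w) ^ 2 / (4 * Dσ * t)) - kd * t) * (rR - w) *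
            Real.sqrt (4 * Dσ * t / Real.pi) +
          (rR ^ 2 + 2 * Dσ * t - w ^ 2) * erf ((rR + w) / Real.sqrt (4 * Dσ * t)) *
            Real.exp (-(kd * t))))) +
      Dσ * t * (erf ((rR + w) / Real.sqrt (4 * Dσ * t)) * Real.exp (-(kd * t)) +
        erf ((rR - w) / Real.sqrt (4 * Dσ * t)) * Real.exp (-(kd * t))))
      (z / 2 * (erf ((rR - z) / Real.sqrt (4 * Dσ * t)) +
          erf ((rR + z) / Real.sqrt (4 * Dσ * t))) * Real.exp (-(kd * t)) +
        Real.sqrt (4 * Dσ * t) / (2 * Real.sqrt Real.pi) *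
          (Real.exp (-((rR + z) ^ 2 / (4 * Dσ * t)) - kd * t) -
            Real.exp (-((rR - z) ^ 2 / (4 * Dσ * t)) - kd * t))) z := by
  have hπ : (0:ℝ) < Real.pi := Real.pi_pos
  have h4D : (0:ℝ) < 4 * Dσ * t := by positivity
  have hm : HasDerivAt (fun w : ℝ => rR - w) (-1) z := by
    simpa using (hasDerivAt_id z).const_sub rR
  have hp : HasDerivAt (fun w : ℝ => rR + w) 1 z := by
    simpa using (hasDerivAt_id z).const_add rR
  have hm2 : HasDerivAt (fun w : ℝ => (rR - w) ^ 2) (-(2 * (rR - z))) z := by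
    have h := hm.pow 2
    refine h.congr_deriv ?_
    norm_num
  have hp2 : HasDerivAt (fun w : ℝ => (rR + w) ^ 2) (2 * (rR + z)) z := by
    have h := hp.pow 2
    refine h.congr_deriv ?_
    norm_num
  have hm3 : HasDerivAt (fun w : ℝ => -((rR - w) ^ 2 / (4 * Dσ * t)) - kd * t)
      ((rR - z) / (2 * Dσ * t)) z := by
    have h := ((hm2.div_const (4 * Dσ * t)).neg).sub_const (kd * t)
    refine h.congr_deriv ?_
    field_simp
    ring
  have hp3 : HasDerivAt (fun w : ℝ => -((rR + w) ^ 2 / (4 * Dσ * t)) - kd * t)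
      (-((rR + z) / (2 * Dσ * t))) z := by
    have h := ((hp2.div_const (4 * Dσ * t)).neg).sub_const (kd * t)
    refine h.congr_deriv ?_
    field_simp
    ring
  have hmA : HasDerivAt (fun w : ℝ => Real.exp (-((rR - w) ^ 2 / (4 * Dσ * t)) - kd * t))
      (Real.exp (-((rR - z) ^ 2 / (4 * Dσ * t)) - kd * t) * ((rR - z) / (2 * Dσ * t))) z :=
    hm3.exp
  have hpA : HasDerivAt (fun w : ℝ => Real.exp (-((rR + w) ^ 2 / (4 * Dσ * t)) - kd * t))
      (Real.exp (-((rR + z) ^ 2 / (4 * Dσ * t)) - kd * t) * (-((rR + z) / (2 * Dσ * t)))) z :=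
    hp3.exp
  have hEm : HasDerivAt (fun w : ℝ => erf ((rR - w) / Real.sqrt (4 * Dσ * t)))
      ((2 / Real.sqrt Real.pi * Real.exp (-((rR - z) / Real.sqrt (4 * Dσ * t)) ^ 2)) *
        (-1 / Real.sqrt (4 * Dσ * t))) z :=
    (erf_hasDerivAt ((rR - z) / Real.sqrt (4 * Dσ * t))).comp (h₂ := erf)
      (h := fun w : ℝ => (rR - w) / Real.sqrt (4 * Dσ * t)) z
      (hm.div_const (Real.sqrt (4 * Dσ * t)))
  have hEp : HasDerivAt (fun w : ℝ => erf ((rR + w) / Real.sqrt (4 * Dσ * t)))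
      ((2 / Real.sqrt Real.pi * Real.exp (-((rR + z) / Real.sqrt (4 * Dσ * t)) ^ 2)) *
        (1 / Real.sqrt (4 * Dσ * t))) z :=
    (erf_hasDerivAt ((rR + z) / Real.sqrt (4 * Dσ * t))).comp (h₂ := erf)
      (h := fun w : ℝ => (rR + w) / Real.sqrt (4 * Dσ * t)) z
      (hp.div_const (Real.sqrt (4 * Dσ * t)))
  have hC : HasDerivAt (fun w : ℝ => rR ^ 2 + 2 * Dσ * t - w ^ 2) (-(2 * z)) z := by
    have h := (hasDerivAt_pow 2 z).const_sub (rR ^ 2 + 2 * Dσ * t)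
    refine h.congr_deriv ?_
    norm_num
  have hbig := HasDerivAt.add
    (HasDerivAt.const_mul (-(1/4))
      ((((hmA.mul hp).mul_const (Real.sqrt (4 * Dσ * t / Real.pi))).add
          ((hC.mul hEm).mul_const (Real.exp (-(kd * t))))).add
        (((hpA.mul hm).mul_const (Real.sqrt (4 * Dσ * t / Real.pi))).add
          ((hC.mul hEp).mul_const (Real.exp (-(kd * t)))))))
    (HasDerivAt.const_mul (Dσ * t)
      ((hEp.mul_const (Real.exp (-(kd * t)))).add (hEm.mul_const (Real.exp (-(kd * t))))))
  refine hbig.congr_deriv ?_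
  set c := Real.sqrt (4 * Dσ * t) with hcdef
  have hc : 0 < c := Real.sqrt_pos.2 h4D
  have hc2 : c ^ 2 = 4 * Dσ * t := Real.sq_sqrt h4D.le
  set sπ := Real.sqrt Real.pi with hsπdef
  have hsπ : 0 < sπ := Real.sqrt_pos.2 hπ
  have hq4 : Real.sqrt (4 * Dσ * t / Real.pi) = c / sπ := by
    have h1 : 4 * Dσ * t / Real.pi = (c / sπ) ^ 2 := by
      rw [div_pow, hc2, hsπdef, Real.sq_sqrt hπ.le]
    rw [h1, Real.sqrt_sq (by positivity)]
  rw [hq4]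
  rw [show (4:ℝ) * Dσ * t = c ^ 2 from hc2.symm]
  rw [show (2:ℝ) * Dσ * t = c ^ 2 / 2 from by rw [hc2]; ring]
  rw [show Dσ * t = c ^ 2 / 4 from by rw [hc2]; ring]
  simp only [div_pow]
  have hsplit : ∀ u : ℝ, Real.exp (-u - kd * t) = Real.exp (-u) * Real.exp (-(kd * t)) := by
    intro u
    rw [← Real.exp_add]
    ring_nf
  simp only [hsplit]
  field_simp
  ring

set_option maxHeartbeats 1000000 in
theorem stmt_13 (rT r0 rR Dσ kd t : ℝ)
    (hrT : 0 < rT) (hr : rT < r0) (hrR : 0 < rR) (hD : 0 < Dσ) (hkd : 0 ≤ kd) (ht : 0 < t)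
    (Pα : ℝ → ℝ → ℝ)
    (hPα : ∀ ρ s, 0 < ρ → 0 < s → Pα ρ s =
      1 / 2 * (erf ((rR - ρ) / Real.sqrt (4 * Dσ * s)) +
          erf ((rR + ρ) / Real.sqrt (4 * Dσ * s))) * Real.exp (-(kd * s)) +
        1 / ρ * Real.sqrt (Dσ * s / Real.pi) *
          (Real.exp (-((rR + ρ) ^ 2 / (4 * Dσ * s)) - kd * s) -
            Real.exp (-((rR - ρ) ^ 2 / (4 * Dσ * s)) - kd * s)))
    (ξ1 ξ2 : ℝ → ℝ → ℝ)
    (hξ1 : ∀ z s, ξ1 z s =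
      Real.exp (-((rR - z) ^ 2 / (4 * Dσ * s)) - kd * s) * (rR + z) *
          Real.sqrt (4 * Dσ * s / Real.pi) +
        (rR ^ 2 + 2 * Dσ * s - z ^ 2) * erf ((rR - z) / Real.sqrt (4 * Dσ * s)) *
          Real.exp (-(kd * s)))
    (hξ2 : ∀ z s, ξ2 z s = erf ((rR + z) / Real.sqrt (4 * Dσ * s)) * Real.exp (-(kd * s))) :
    1 / (2 * rT) * ∫ x in (-rT)..rT, Pα (Real.sqrt (rT ^ 2 + r0 ^ 2 - 2 * r0 * x)) t =
      1 / (8 * r0 * rT) *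
          (ξ1 (r0 - rT) t + ξ1 (rT - r0) t - ξ1 (r0 + rT) t - ξ1 (-r0 - rT) t) +
        Dσ * t / (2 * rT * r0) *
          (ξ2 (rT + r0) t + ξ2 (-rT - r0) t - ξ2 (r0 - rT) t - ξ2 (rT - r0) t) := by
  have hπ : (0:ℝ) < Real.pi := Real.pi_pos
  have hr0 : 0 < r0 := hrT.trans hr
  have h4D : (0:ℝ) < 4 * Dσ * t := by positivity
  have hq : Real.sqrt (Dσ * t / Real.pi) =
      Real.sqrt (4 * Dσ * t) / (2 * Real.sqrt Real.pi) := by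
    have h1 : Dσ * t / Real.pi = (Real.sqrt (4 * Dσ * t) / (2 * Real.sqrt Real.pi)) ^ 2 := by
      rw [div_pow, Real.sq_sqrt h4D.le, mul_pow, Real.sq_sqrt hπ.le]
      ring
    rw [h1, Real.sqrt_sq (by positivity)]
  -- Gξ in terms of the explicit formula
  have hGeq : (fun z : ℝ => -(1/4) * (ξ1 z t + ξ1 (-z) t) + Dσ * t * (ξ2 z t + ξ2 (-z) t)) =
      (fun w : ℝ =>
      -(1/4) * ((Real.exp (-((rR - w) ^ 2 / (4 * Dσ * t)) - kd * t) * (rR + w) *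
            Real.sqrt (4 * Dσ * t / Real.pi) +
          (rR ^ 2 + 2 * Dσ * t - w ^ 2) * erf ((rR - w) / Real.sqrt (4 * Dσ * t)) *
            Real.exp (-(kd * t)) +
        (Real.exp (-((rR + w) ^ 2 / (4 * Dσ * t)) - kd * t) * (rR - w) *
            Real.sqrt (4 * Dσ * t / Real.pi) +
          (rR ^ 2 + 2 * Dσ * t - w ^ 2) * erf ((rR + w) / Real.sqrt (4 * Dσ * t)) *
            Real.exp (-(kd * t))))) +
      Dσ * t * (erf ((rR + w) / Real.sqrt (4 * Dσ * t)) * Real.exp (-(kd * t)) +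
        erf ((rR - w) / Real.sqrt (4 * Dσ * t)) * Real.exp (-(kd * t)))) := by
    funext z
    rw [hξ1 z t, hξ1 (-z) t, hξ2 z t, hξ2 (-z) t]
    simp only [sub_neg_eq_add, neg_neg, neg_sq, ← sub_eq_add_neg]
  have hGd : ∀ ρ : ℝ, HasDerivAt
      (fun z : ℝ => -(1/4) * (ξ1 z t + ξ1 (-z) t) + Dσ * t * (ξ2 z t + ξ2 (-z) t))
      (ρ / 2 * (erf ((rR - ρ) / Real.sqrt (4 * Dσ * t)) +
          erf ((rR + ρ) / Real.sqrt (4 * Dσ * t))) * Real.exp (-(kd * t)) +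
        Real.sqrt (4 * Dσ * t) / (2 * Real.sqrt Real.pi) *
          (Real.exp (-((rR + ρ) ^ 2 / (4 * Dσ * t)) - kd * t) -
            Real.exp (-((rR - ρ) ^ 2 / (4 * Dσ * t)) - kd * t))) ρ := by
    intro ρ
    rw [hGeq]
    exact G_hasDerivAt rR Dσ kd t hD ht ρ
  -- positivity of ρf on the interval
  have hupos : ∀ x ∈ Set.uIcc (-rT) rT, (r0 - rT) ^ 2 ≤ rT ^ 2 + r0 ^ 2 - 2 * r0 * x := by
    intro x hx
    rw [Set.uIcc_of_le (by linarith)] at hx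
    obtain ⟨_, hx2⟩ := hx
    nlinarith
  have hρpos : ∀ x ∈ Set.uIcc (-rT) rT, 0 < Real.sqrt (rT ^ 2 + r0 ^ 2 - 2 * r0 * x) := by
    intro x hx
    have h1 := hupos x hx
    have : (0:ℝ) < (r0 - rT) ^ 2 := pow_pos (by linarith) 2
    exact Real.sqrt_pos.2 (by linarith)
  -- derivative of F on the interval
  have hFd : ∀ x ∈ Set.uIcc (-rT) rT, HasDerivAt
      (fun y : ℝ => -(1/r0) * (-(1/4) *
          (ξ1 (Real.sqrt (rT ^ 2 + r0 ^ 2 - 2 * r0 * y)) t +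
            ξ1 (-Real.sqrt (rT ^ 2 + r0 ^ 2 - 2 * r0 * y)) t) +
        Dσ * t * (ξ2 (Real.sqrt (rT ^ 2 + r0 ^ 2 - 2 * r0 * y)) t +
          ξ2 (-Real.sqrt (rT ^ 2 + r0 ^ 2 - 2 * r0 * y)) t)))
      (1 / 2 * (erf ((rR - Real.sqrt (rT ^ 2 + r0 ^ 2 - 2 * r0 * x)) / Real.sqrt (4 * Dσ * t)) +
          erf ((rR + Real.sqrt (rT ^ 2 + r0 ^ 2 - 2 * r0 * x)) / Real.sqrt (4 * Dσ * t))) *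
            Real.exp (-(kd * t)) +
        1 / Real.sqrt (rT ^ 2 + r0 ^ 2 - 2 * r0 * x) * Real.sqrt (Dσ * t / Real.pi) *
          (Real.exp (-((rR + Real.sqrt (rT ^ 2 + r0 ^ 2 - 2 * r0 * x)) ^ 2 / (4 * Dσ * t)) - kd * t) -
            Real.exp (-((rR - Real.sqrt (rT ^ 2 + r0 ^ 2 - 2 * r0 * x)) ^ 2 / (4 * Dσ * t)) - kd * t)))
      x := by
    intro x hx
    have hup : 0 < rT ^ 2 + r0 ^ 2 - 2 * r0 * x := by
      have h1 := hupos x hx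
      have : (0:ℝ) < (r0 - rT) ^ 2 := pow_pos (by linarith) 2
      linarith
    have hρp : 0 < Real.sqrt (rT ^ 2 + r0 ^ 2 - 2 * r0 * x) := hρpos x hx
    have hud : HasDerivAt (fun y : ℝ => rT ^ 2 + r0 ^ 2 - 2 * r0 * y) (-(2 * r0)) x := by
      have h := ((hasDerivAt_id x).const_mul (2 * r0)).const_sub (rT ^ 2 + r0 ^ 2)
      simpa using h
    have hρd : HasDerivAt (fun y : ℝ => Real.sqrt (rT ^ 2 + r0 ^ 2 - 2 * r0 * y))
        (1 / (2 * Real.sqrt (rT ^ 2 + r0 ^ 2 - 2 * r0 * x)) * -(2 * r0)) x :=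
      (Real.hasDerivAt_sqrt hup.ne').comp x hud
    have h := ((hGd (Real.sqrt (rT ^ 2 + r0 ^ 2 - 2 * r0 * x))).comp x hρd).const_mul (-(1/r0))
    refine h.congr_deriv ?_
    rw [hq]
    generalize Real.sqrt (rT ^ 2 + r0 ^ 2 - 2 * r0 * x) = ρ at hρp ⊢
    field_simp
  -- continuity / integrability of the closed form
  have hρcont : Continuous fun x : ℝ => Real.sqrt (rT ^ 2 + r0 ^ 2 - 2 * r0 * x) :=
    Real.continuous_sqrt.comp (continuous_const.sub (continuous_const.mul continuous_id))
  have hint : IntervalIntegrable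
      (fun x : ℝ =>
        1 / 2 * (erf ((rR - Real.sqrt (rT ^ 2 + r0 ^ 2 - 2 * r0 * x)) / Real.sqrt (4 * Dσ * t)) +
          erf ((rR + Real.sqrt (rT ^ 2 + r0 ^ 2 - 2 * r0 * x)) / Real.sqrt (4 * Dσ * t))) *
            Real.exp (-(kd * t)) +
        1 / Real.sqrt (rT ^ 2 + r0 ^ 2 - 2 * r0 * x) * Real.sqrt (Dσ * t / Real.pi) *
          (Real.exp (-((rR + Real.sqrt (rT ^ 2 + r0 ^ 2 - 2 * r0 * x)) ^ 2 / (4 * Dσ * t)) - kd * t) -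
            Real.exp (-((rR - Real.sqrt (rT ^ 2 + r0 ^ 2 - 2 * r0 * x)) ^ 2 / (4 * Dσ * t)) - kd * t)))
      MeasureTheory.volume (-rT) rT := by
    apply ContinuousOn.intervalIntegrable
    apply ContinuousOn.add
    · apply Continuous.continuousOn
      apply Continuous.mul
      · apply Continuous.mul continuous_const
        exact (erf_continuous.comp ((continuous_const.sub hρcont).div_const _)).add
          (erf_continuous.comp ((continuous_const.add hρcont).div_const _))
      · exact continuous_const
    · apply ContinuousOn.mul
      · apply ContinuousOn.mul
        · exact ContinuousOn.div continuousOn_const hρcont.continuousOn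
            (fun x hx => (hρpos x hx).ne')
        · exact continuousOn_const
      · apply Continuous.continuousOn
        exact (Real.continuous_exp.comp
            ((((continuous_const.add hρcont).pow 2).div_const _).neg.sub continuous_const)).sub
          (Real.continuous_exp.comp
            ((((continuous_const.sub hρcont).pow 2).div_const _).neg.sub continuous_const))
  -- rewrite the integrand
  have hrepl : Set.EqOn (fun x : ℝ => Pα (Real.sqrt (rT ^ 2 + r0 ^ 2 - 2 * r0 * x)) t)
      (fun x : ℝ =>
        1 / 2 * (erf ((rR - Real.sqrt (rT ^ 2 + r0 ^ 2 - 2 * r0 * x)) / Real.sqrt (4 * Dσ * t)) +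
          erf ((rR + Real.sqrt (rT ^ 2 + r0 ^ 2 - 2 * r0 * x)) / Real.sqrt (4 * Dσ * t))) *
            Real.exp (-(kd * t)) +
        1 / Real.sqrt (rT ^ 2 + r0 ^ 2 - 2 * r0 * x) * Real.sqrt (Dσ * t / Real.pi) *
          (Real.exp (-((rR + Real.sqrt (rT ^ 2 + r0 ^ 2 - 2 * r0 * x)) ^ 2 / (4 * Dσ * t)) - kd * t) -
            Real.exp (-((rR - Real.sqrt (rT ^ 2 + r0 ^ 2 - 2 * r0 * x)) ^ 2 / (4 * Dσ * t)) - kd * t)))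
      (Set.uIcc (-rT) rT) := by
    intro x hx
    exact hPα _ t (hρpos x hx) ht
  rw [intervalIntegral.integral_congr hrepl,
    intervalIntegral.integral_eq_sub_of_hasDerivAt hFd hint]
  have e1 : Real.sqrt (rT ^ 2 + r0 ^ 2 - 2 * r0 * rT) = r0 - rT := by
    rw [show rT ^ 2 + r0 ^ 2 - 2 * r0 * rT = (r0 - rT) ^ 2 by ring]
    exact Real.sqrt_sq (by linarith)
  have e2 : Real.sqrt (rT ^ 2 + r0 ^ 2 - 2 * r0 * (-rT)) = r0 + rT := by
    rw [show rT ^ 2 + r0 ^ 2 - 2 * r0 * (-rT) = (r0 + rT) ^ 2 by ring]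
    exact Real.sqrt_sq (by positivity)
  simp only [e1, e2]
  rw [show rT - r0 = -(r0 - rT) by ring]
  rw [show -r0 - rT = -(r0 + rT) by ring]
  rw [show -rT - r0 = -(rT + r0) by ring]
  rw [show rT + r0 = r0 + rT by ring]
  field_simp
  ring
end

section
/- For every t̂ with 0 < t̂ ≤ τ, the fraction of molecules remaining unreleased after time t̂ is ∫_{t̂}^{τ} f_{c,1}(t) dt + ∫_τ^∞ f_{c,2}(t) dt = C Σ_n c_n (τ − t̂ + (1 − exp(−D_v λ_n² t̂))/(D_v λ_n²)). (Equation (40) of Appendix F, the quantity β₂(t̂) for t̂ ≤ τ.) -/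
open MeasureTheory Filter Topology

lemma one_sub_exp_mem (b x : ℝ) (hb : 0 < b) (hx : 0 ≤ x) :
    0 ≤ 1 - Real.exp (-(b * x)) ∧ 1 - Real.exp (-(b * x)) ≤ 1 := by
  constructor
  · have : Real.exp (-(b * x)) ≤ 1 := Real.exp_le_one_iff.mpr (by nlinarith)
    linarith
  · have := Real.exp_pos (-(b * x)); linarith

lemma one_sub_exp_le (y : ℝ) : 1 - Real.exp (-y) ≤ y := by
  have := Real.add_one_le_exp (-y); linarith

lemma ftc_one_sub_exp (b u v : ℝ) (hb : 0 < b) :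
    ∫ t in u..v, (1 - Real.exp (-(b * t))) =
      (v - u) + (Real.exp (-(b * v)) - Real.exp (-(b * u))) / b := by
  have h := intervalIntegral.integral_eq_sub_of_hasDerivAt
      (f := fun t : ℝ => t + Real.exp (-(b * t)) / b)
      (f' := fun t : ℝ => 1 - Real.exp (-(b * t))) (a := u) (b := v) ?_ ?_
  · rw [h]; field_simp; ring
  · intro t _
    have h1 := (((hasDerivAt_id t).const_mul b).neg.exp).div_const b
    have h2 := (hasDerivAt_id t).add h1
    refine h2.congr_deriv ?_
    simp only [Pi.neg_apply, id]
    field_simp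
    ring
  · apply Continuous.intervalIntegrable
    continuity

lemma exp_integral_Ioi (b τ : ℝ) (hb : 0 < b) :
    ∫ t in Set.Ioi τ, Real.exp (-(b * t)) = Real.exp (-(b * τ)) / b := by
  have hderiv : ∀ x ∈ Set.Ici τ, HasDerivAt (fun t : ℝ => -Real.exp (-(b * t)) / b)
      (Real.exp (-(b * x))) x := by
    intro x _
    have h := (((hasDerivAt_id x).const_mul b).neg.exp).neg.div_const b
    refine h.congr_deriv ?_
    simp only [Pi.neg_apply, id]
    field_simp
  have hint : IntegrableOn (fun t : ℝ => Real.exp (-(b * t))) (Set.Ioi τ) := by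
    simpa [neg_mul] using exp_neg_integrableOn_Ioi τ hb
  have htend : Tendsto (fun t : ℝ => -Real.exp (-(b * t)) / b) atTop (𝓝 0) := by
    have : Tendsto (fun t : ℝ => -Real.exp (-(b * t)) / b) atTop (𝓝 (-0 / b)) := by
      refine Tendsto.div_const (Tendsto.neg ?_) _
      exact Real.tendsto_exp_atBot.comp
        (by simpa [neg_mul] using tendsto_id.const_mul_atTop_of_neg (neg_neg_iff_pos.2 hb))
    simpa using this
  have := MeasureTheory.integral_Ioi_of_hasDerivAt_of_tendsto' hderiv hint htend
  rw [this]
  field_simp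
  ring

set_option maxHeartbeats 1000000 in
theorem stmt_15
    (rT kf μ Nv Dv : ℝ)
    (hrT : 0 < rT) (hkf : 0 < kf) (hμ : 0 < μ) (hNv : 0 < Nv) (hDv : 0 < Dv)
    (τ : ℝ) (hτ : τ = Nv / μ)
    (C : ℝ) (hCdef : C = 4 * rT ^ 2 * kf * μ / (Nv * Dv))
    (lam : ℕ → ℝ) (hlam : ∀ n, 0 < lam n)
    (hne : ∀ n, 2 * lam n * rT ≠ Real.sin (2 * lam n * rT))
    (c : ℕ → ℝ)
    (hc : ∀ n, c n = lam n * (Real.sin (lam n * rT) / (lam n * rT)) /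
          (2 * lam n * rT - Real.sin (2 * lam n * rT)))
    (hsum : Summable fun n => |c n|)
    (fc1 : ℝ → ℝ)
    (hfc1 : ∀ t, fc1 t = C * ∑' n, c n * (1 - Real.exp (-(Dv * lam n ^ 2 * t))))
    (fc2 : ℝ → ℝ)
    (hfc2 : ∀ t, fc2 t = C * ∑' n, c n *
          (Real.exp (-(Dv * lam n ^ 2 * (t - τ))) - Real.exp (-(Dv * lam n ^ 2 * t))))
    (tHat : ℝ) (h1 : 0 < tHat) (h2 : tHat ≤ τ) :
    (∫ t in tHat..τ, fc1 t) + (∫ t in Set.Ioi τ, fc2 t) =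
      C * ∑' n, c n * (τ - tHat + (1 - Real.exp (-(Dv * lam n ^ 2 * tHat))) / (Dv * lam n ^ 2)) := by
  have hτ0 : 0 < τ := lt_of_lt_of_le h1 h2
  set a : ℕ → ℝ := fun n => Dv * lam n ^ 2 with hadef
  have ha : ∀ n, 0 < a n := fun n => mul_pos hDv (pow_pos (hlam n) 2)
  set F : ℕ → ℝ → ℝ := fun n t => c n * (1 - Real.exp (-(a n * t))) with hFdef
  set G : ℕ → ℝ → ℝ := fun n t =>
    c n * (Real.exp (-(a n * (t - τ))) - Real.exp (-(a n * t))) with hGdef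
  have hFcont : ∀ n, Continuous (F n) := fun n =>
    continuous_const.mul (continuous_const.sub
      (Real.continuous_exp.comp ((continuous_const.mul continuous_id).neg)))
  have hGcont : ∀ n, Continuous (G n) := fun n =>
    continuous_const.mul
      ((Real.continuous_exp.comp
          ((continuous_const.mul (continuous_id.sub continuous_const)).neg)).sub
        (Real.continuous_exp.comp ((continuous_const.mul continuous_id).neg)))
  have hFint : ∀ n, IntegrableOn (F n) (Set.Ioc tHat τ) :=
    fun n => (hFcont n).integrableOn_Ioc
  -- rewrite of G
  have hGeq : ∀ n t, G n t = (c n * (Real.exp (a n * τ) - 1)) * Real.exp (-(a n * t)) := by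
    intro n t
    have h : -(a n * (t - τ)) = a n * τ + -(a n * t) := by ring
    simp only [hGdef, h, Real.exp_add]
    ring
  have hGint : ∀ n, IntegrableOn (G n) (Set.Ioi τ) := by
    intro n
    have : IntegrableOn (fun t : ℝ => Real.exp (-(a n * t))) (Set.Ioi τ) := by
      simpa [neg_mul] using exp_neg_integrableOn_Ioi τ (ha n)
    have h2' := this.const_mul (c n * (Real.exp (a n * τ) - 1))
    exact MeasureTheory.IntegrableOn.congr_fun h2' (fun t _ => (hGeq n t).symm) measurableSet_Ioi
  -- value of the Ioi integral of G
  have hval : ∀ n, (Real.exp (a n * τ) - 1) * (Real.exp (-(a n * τ)) / a n)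
      = (1 - Real.exp (-(a n * τ))) / a n := by
    intro n
    rw [Real.exp_neg]
    field_simp
  have hGval : ∀ n, ∫ t in Set.Ioi τ, G n t = c n * ((1 - Real.exp (-(a n * τ))) / a n) := by
    intro n
    calc ∫ t in Set.Ioi τ, G n t
        = ∫ t in Set.Ioi τ, (c n * (Real.exp (a n * τ) - 1)) * Real.exp (-(a n * t)) := by
          exact setIntegral_congr_fun measurableSet_Ioi (fun t _ => hGeq n t)
      _ = (c n * (Real.exp (a n * τ) - 1)) * ∫ t in Set.Ioi τ, Real.exp (-(a n * t)) :=
          integral_const_mul _ _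
      _ = (c n * (Real.exp (a n * τ) - 1)) * (Real.exp (-(a n * τ)) / a n) := by
          rw [exp_integral_Ioi _ _ (ha n)]
      _ = c n * ((1 - Real.exp (-(a n * τ))) / a n) := by rw [mul_assoc, hval n]
  have hbdd : ∀ n, (1 - Real.exp (-(a n * τ))) / a n ≤ τ := by
    intro n
    rw [div_le_iff₀ (ha n)]
    have := one_sub_exp_le (a n * τ)
    nlinarith
  -- norm bounds
  have hFnorm : ∀ n, ∫ t in Set.Ioc tHat τ, ‖F n t‖ ≤ (τ - tHat) * |c n| := by
    intro n
    have hmono : ∫ t in Set.Ioc tHat τ, ‖F n t‖ ≤ ∫ _t in Set.Ioc tHat τ, |c n| := by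
      refine setIntegral_mono_on (hFint n).norm
        (integrableOn_const measure_Ioc_lt_top.ne) measurableSet_Ioc ?_
      intro t ht
      have ht0 : 0 ≤ t := le_of_lt (lt_of_lt_of_le h1 (le_of_lt ht.1))
      obtain ⟨hge, hle⟩ := one_sub_exp_mem (a n) t (ha n) ht0
      have : ‖F n t‖ = |c n| * |1 - Real.exp (-(a n * t))| := by
        simp [hFdef, abs_mul]
      rw [this, abs_of_nonneg hge]
      calc |c n| * (1 - Real.exp (-(a n * t))) ≤ |c n| * 1 :=
            mul_le_mul_of_nonneg_left hle (abs_nonneg _)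
        _ = |c n| := mul_one _
    rw [setIntegral_const, Real.volume_real_Ioc_of_le h2] at hmono
    simpa using hmono
  have hGnormval : ∀ n, ∫ t in Set.Ioi τ, ‖G n t‖
      = |c n| * ((1 - Real.exp (-(a n * τ))) / a n) := by
    intro n
    have habs : ∀ t, ‖G n t‖ = (|c n| * (Real.exp (a n * τ) - 1)) * Real.exp (-(a n * t)) := by
      intro t
      have hE : (1:ℝ) ≤ Real.exp (a n * τ) :=
        Real.one_le_exp (le_of_lt (mul_pos (ha n) hτ0))
      rw [hGeq n t, Real.norm_eq_abs, abs_mul, abs_mul, abs_of_nonneg (by linarith : (0:ℝ) ≤ Real.exp (a n * τ) - 1), abs_of_nonneg (Real.exp_pos _).le]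
    calc ∫ t in Set.Ioi τ, ‖G n t‖
        = ∫ t in Set.Ioi τ, (|c n| * (Real.exp (a n * τ) - 1)) * Real.exp (-(a n * t)) :=
          setIntegral_congr_fun measurableSet_Ioi (fun t _ => habs t)
      _ = (|c n| * (Real.exp (a n * τ) - 1)) * ∫ t in Set.Ioi τ, Real.exp (-(a n * t)) :=
          integral_const_mul _ _
      _ = (|c n| * (Real.exp (a n * τ) - 1)) * (Real.exp (-(a n * τ)) / a n) := by
          rw [exp_integral_Ioi _ _ (ha n)]
      _ = |c n| * ((1 - Real.exp (-(a n * τ))) / a n) := by rw [mul_assoc, hval n]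
  have hGnorm : ∀ n, ∫ t in Set.Ioi τ, ‖G n t‖ ≤ τ * |c n| := by
    intro n
    rw [hGnormval n, mul_comm τ |c n|]
    exact mul_le_mul_of_nonneg_left (hbdd n) (abs_nonneg _)
  -- swap sum and integral, first integral
  have swap1 : ∫ t in Set.Ioc tHat τ, (∑' n, F n t) ∂volume
      = ∑' n, ∫ t in Set.Ioc tHat τ, F n t := by
    refine integral_tsum (fun n => ((hFcont n).aestronglyMeasurable).restrict) ?_
    have heq : ∀ n, ∫⁻ t, ‖F n t‖₊ ∂(volume.restrict (Set.Ioc tHat τ))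
        = ENNReal.ofReal (∫ t in Set.Ioc tHat τ, ‖F n t‖) :=
      fun n => (ofReal_integral_norm_eq_lintegral_enorm (hFint n)).symm
    have hle : ∑' n, ∫⁻ t, ‖F n t‖₊ ∂(volume.restrict (Set.Ioc tHat τ))
        ≤ ∑' n, ENNReal.ofReal ((τ - tHat) * |c n|) := by
      refine ENNReal.tsum_le_tsum (fun n => ?_)
      rw [heq n]
      exact ENNReal.ofReal_le_ofReal (hFnorm n)
    have hfin : ∑' n, ENNReal.ofReal ((τ - tHat) * |c n|) ≠ ⊤ := by
      rw [← ENNReal.ofReal_tsum_of_nonneg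
        (fun n => mul_nonneg (by linarith) (abs_nonneg _)) (hsum.mul_left _)]
      exact ENNReal.ofReal_ne_top
    exact ne_top_of_le_ne_top hfin hle
  have swap2 : ∫ t in Set.Ioi τ, (∑' n, G n t) ∂volume
      = ∑' n, ∫ t in Set.Ioi τ, G n t := by
    refine integral_tsum (fun n => ((hGcont n).aestronglyMeasurable).restrict) ?_
    have heq : ∀ n, ∫⁻ t, ‖G n t‖₊ ∂(volume.restrict (Set.Ioi τ))
        = ENNReal.ofReal (∫ t in Set.Ioi τ, ‖G n t‖) :=
      fun n => (ofReal_integral_norm_eq_lintegral_enorm (hGint n)).symm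
    have hle : ∑' n, ∫⁻ t, ‖G n t‖₊ ∂(volume.restrict (Set.Ioi τ))
        ≤ ∑' n, ENNReal.ofReal (τ * |c n|) := by
      refine ENNReal.tsum_le_tsum (fun n => ?_)
      rw [heq n]
      exact ENNReal.ofReal_le_ofReal (hGnorm n)
    have hfin : ∑' n, ENNReal.ofReal (τ * |c n|) ≠ ⊤ := by
      rw [← ENNReal.ofReal_tsum_of_nonneg
        (fun n => mul_nonneg hτ0.le (abs_nonneg _)) (hsum.mul_left _)]
      exact ENNReal.ofReal_ne_top
    exact ne_top_of_le_ne_top hfin hle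
  -- summability of the two series of integrals
  have S1 : Summable (fun n => ∫ t in Set.Ioc tHat τ, F n t) := by
    refine Summable.of_norm_bounded (hsum.mul_left (τ - tHat)) (fun n => ?_)
    exact (norm_integral_le_integral_norm _).trans (hFnorm n)
  have S2 : Summable (fun n => ∫ t in Set.Ioi τ, G n t) := by
    refine Summable.of_norm_bounded (hsum.mul_left τ) (fun n => ?_)
    exact (norm_integral_le_integral_norm _).trans (hGnorm n)
  -- value of the interval integral of F plus the Ioi integral of G
  have key : ∀ n, (∫ t in Set.Ioc tHat τ, F n t) + (∫ t in Set.Ioi τ, G n t)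
      = c n * (τ - tHat + (1 - Real.exp (-(a n * tHat))) / a n) := by
    intro n
    have hF : ∫ t in Set.Ioc tHat τ, F n t
        = c n * ((τ - tHat) + (Real.exp (-(a n * τ)) - Real.exp (-(a n * tHat))) / a n) := by
      rw [← intervalIntegral.integral_of_le h2]
      simp only [hFdef]
      rw [intervalIntegral.integral_const_mul, ftc_one_sub_exp _ _ _ (ha n)]
    rw [hF, hGval n]
    have han := (ha n).ne'
    field_simp
    ring
  -- put everything together
  calc (∫ t in tHat..τ, fc1 t) + (∫ t in Set.Ioi τ, fc2 t)
      = (∫ t in tHat..τ, C * ∑' n, F n t) + (∫ t in Set.Ioi τ, C * ∑' n, G n t) := by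
        simp only [hfc1, hfc2, hFdef, hGdef, hadef]
    _ = C * (∫ t in Set.Ioc tHat τ, ∑' n, F n t) + C * (∫ t in Set.Ioi τ, ∑' n, G n t) := by
        rw [intervalIntegral.integral_const_mul, intervalIntegral.integral_of_le h2,
          integral_const_mul]
    _ = C * ((∑' n, ∫ t in Set.Ioc tHat τ, F n t) + (∑' n, ∫ t in Set.Ioi τ, G n t)) := by
        rw [swap1, swap2]; ring
    _ = C * ∑' n, ((∫ t in Set.Ioc tHat τ, F n t) + (∫ t in Set.Ioi τ, G n t)) := by
        rw [Summable.tsum_add S1 S2]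
    _ = C * ∑' n, c n * (τ - tHat + (1 - Real.exp (-(a n * tHat))) / a n) := by
        rw [tsum_congr key]
end
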